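/- Let d₁ and d₂ be continuous, strictly decreasing functions on [0, m₁] and [0, m₂] respectively with d₁(m₁) = d₂(m₂) = 0 and d₁(0), d₂(0) > 0. For each r with 0 < r < m₁m₂/(m₁+m₂) there exists a unique a = a(r) ∈ (r/m₁, 1−r/m₂) such that d₁(r/a) = d₂(r/(1−a)). -/

import Mathlib

/-- Well-definedness of the vDF optimal time split: for continuous strictly decreasing
per-hop DMT curves `d₁, d₂` vanishing at their maximal multiplexing gains `m₁, m₂`,
every `r ∈ (0, m₁m₂/(m₁+m₂))` admits a unique `a ∈ (r/m₁, 1 - r/m₂)` with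
`d₁(r/a) = d₂(r/(1-a))`. -/
theorem stmt13 (m1 m2 : ℝ) (hm1 : 0 < m1) (hm2 : 0 < m2)
    (d1 d2 : ℝ → ℝ)
    (hc1 : ContinuousOn d1 (Set.Icc 0 m1)) (hc2 : ContinuousOn d2 (Set.Icc 0 m2))
    (ha1 : StrictAntiOn d1 (Set.Icc 0 m1)) (ha2 : StrictAntiOn d2 (Set.Icc 0 m2))
    (he1 : d1 m1 = 0) (he2 : d2 m2 = 0)
    (hp1 : 0 < d1 0) (hp2 : 0 < d2 0)
    (r : ℝ) (hr0 : 0 < r) (hr : r < m1 * m2 / (m1 + m2)) :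
    ∃! a : ℝ, a ∈ Set.Ioo (r / m1) (1 - r / m2) ∧ d1 (r / a) = d2 (r / (1 - a)) := by
  set A : ℝ := r / m1 with hAdef
  set B : ℝ := 1 - r / m2 with hBdef
  set f : ℝ → ℝ := fun a => d1 (r / a) - d2 (r / (1 - a)) with hfdef
  have hsum : 0 < m1 + m2 := by linarith
  have hkey : r * (m1 + m2) < m1 * m2 := (lt_div_iff₀ hsum).mp hr
  have hA0 : 0 < A := div_pos hr0 hm1
  have e1 : r / m1 * m1 = r := div_mul_cancel₀ r hm1.ne'
  have e2 : r / m2 * m2 = r := div_mul_cancel₀ r hm2.ne'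
  have hrm2 : 0 < r / m2 := div_pos hr0 hm2
  have hAB : A < B := by
    rw [hAdef, hBdef]
    nlinarith [mul_pos hm1 hm2]
  have hB1 : B < 1 := by rw [hBdef]; linarith
  -- membership lemmas
  have hmap1 : ∀ a ∈ Set.Icc A B, r / a ∈ Set.Icc (0:ℝ) m1 := by
    intro a ha
    have ha0 : 0 < a := lt_of_lt_of_le hA0 ha.1
    refine ⟨by positivity, ?_⟩
    rw [div_le_iff₀ ha0]
    have := (div_le_iff₀ hm1).mp ha.1
    nlinarith
  have hmap2 : ∀ a ∈ Set.Icc A B, r / (1 - a) ∈ Set.Icc (0:ℝ) m2 := by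
    intro a ha
    have h1a : r / m2 ≤ 1 - a := by
      have := ha.2; rw [hBdef] at this; linarith
    have h1a0 : 0 < 1 - a := lt_of_lt_of_le hrm2 h1a
    refine ⟨by positivity, ?_⟩
    rw [div_le_iff₀ h1a0]
    have := (div_le_iff₀ hm2).mp h1a
    nlinarith
  -- continuity of f on Icc A B
  have hcont : ContinuousOn f (Set.Icc A B) := by
    apply ContinuousOn.sub
    · apply hc1.comp
      · exact ContinuousOn.div continuousOn_const continuousOn_id
          (fun a ha => (lt_of_lt_of_le hA0 ha.1).ne')
      · exact hmap1
    · apply hc2.comp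
      · apply ContinuousOn.div continuousOn_const (by fun_prop)
        intro a ha
        have h1a : r / m2 ≤ 1 - a := by
          have := ha.2; rw [hBdef] at this; linarith
        exact (lt_of_lt_of_le hrm2 h1a).ne'
      · exact hmap2
  -- positivity away from right endpoint
  have hpos1 : ∀ x ∈ Set.Icc (0:ℝ) m1, x < m1 → 0 < d1 x := by
    intro x hx hxm
    have := ha1 hx (Set.right_mem_Icc.mpr hm1.le) hxm
    linarith [he1]
  have hpos2 : ∀ x ∈ Set.Icc (0:ℝ) m2, x < m2 → 0 < d2 x := by
    intro x hx hxm
    have := ha2 hx (Set.right_mem_Icc.mpr hm2.le) hxm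
    linarith [he2]
  have hAmem : A ∈ Set.Icc A B := Set.left_mem_Icc.mpr hAB.le
  have hBmem : B ∈ Set.Icc A B := Set.right_mem_Icc.mpr hAB.le
  -- endpoint values
  have hrA : r / A = m1 := by
    rw [hAdef]; field_simp
  have hfA : f A < 0 := by
    have hmem := hmap2 A hAmem
    have hlt : r / (1 - A) < m2 := by
      have h1A : 0 < 1 - A := by linarith
      rw [div_lt_iff₀ h1A]
      rw [hAdef]
      nlinarith
    have := hpos2 _ hmem hlt
    simp only [hfdef, hrA, he1]
    linarith
  have hfB : 0 < f B := by
    have hmem := hmap1 B hBmem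
    have hr1B : r / (1 - B) = m2 := by
      rw [hBdef]; field_simp
      rw [sub_sub_cancel, div_self hr0.ne']
    have hlt : r / B < m1 := by
      have hB0 : 0 < B := lt_trans hA0 hAB
      rw [div_lt_iff₀ hB0, hBdef]
      nlinarith
    have := hpos1 _ hmem hlt
    simp only [hfdef, hr1B, he2]
    linarith
  -- strict monotonicity
  have hmono : StrictMonoOn f (Set.Icc A B) := by
    intro x hx y hy hxy
    have hx0 : 0 < x := lt_of_lt_of_le hA0 hx.1
    have hy0 : 0 < y := lt_of_lt_of_le hA0 hy.1
    have h1y : 0 < 1 - y := by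
      have := hy.2; rw [hBdef] at this; linarith
    have h1x : 0 < 1 - x := by linarith
    have h1 : r / y < r / x := div_lt_div_of_pos_left hr0 hx0 hxy
    have h2 : r / (1 - x) < r / (1 - y) := div_lt_div_of_pos_left hr0 h1y (by linarith)
    have d1lt : d1 (r / x) < d1 (r / y) := ha1 (hmap1 y hy) (hmap1 x hx) h1
    have d2lt : d2 (r / (1 - y)) < d2 (r / (1 - x)) := ha2 (hmap2 x hx) (hmap2 y hy) h2
    simp only [hfdef]
    linarith
  -- existence via IVT
  obtain ⟨a, haIoo, hfa⟩ := intermediate_value_Ioo hAB.le hcont (Set.mem_Ioo.mpr ⟨hfA, hfB⟩)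
  have heq : d1 (r / a) = d2 (r / (1 - a)) := by
    have : d1 (r / a) - d2 (r / (1 - a)) = 0 := hfa
    linarith
  refine ⟨a, ⟨haIoo, heq⟩, ?_⟩
  intro b ⟨hbIoo, hbeq⟩
  apply hmono.injOn (Set.Ioo_subset_Icc_self hbIoo) (Set.Ioo_subset_Icc_self haIoo)
  show f b = f a
  simp only [hfdef]
  rw [hbeq, heq]
  ring
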